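/- For the prior π(β, A) = A^{-k} on R^p × (0,∞) in the balanced hierarchical model y_i|θ_i ~ N(θ_i,V), θ_i|β,A ~ N(x_i^Tβ, A), the resulting posterior is proper if k < 1 and m > p - 2k + 2; in particular, the uniform prior (k=0) yields a proper posterior when m > p + 2, while the priors A^{-1} and A^{-2} always yield improper posteriors. -/

import Mathlib

open Matrix MeasureTheory Real

/-- The integral whose finiteness is equivalent to propriety of the posterior under the
prior `π(β, A) = A^{-k}` in the balanced hierarchical model (the marginal likelihood
`y | β, A ~ N(Xβ, (V+A) I_m)` times the prior, integrated over `β` and `A`). -/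
noncomputable def posteriorMass {m p : ℕ} (X : Matrix (Fin m) (Fin p) ℝ)
    (y : Fin m → ℝ) (V : ℝ) (k : ℝ) : ENNReal :=
  ∫⁻ A in Set.Ioi (0 : ℝ),
    ENNReal.ofReal (A ^ (-k)) *
      ∫⁻ β : Fin p → ℝ, ENNReal.ofReal
        ((V + A) ^ (-(m : ℝ) / 2) *
          Real.exp (-(∑ i, (y i - X.mulVec β i) ^ 2) / (2 * (V + A))))


lemma gauss_lintegral (p : ℕ) {c : ℝ} (hc : 0 < c) :
    ∫⁻ β : Fin p → ℝ, ENNReal.ofReal (Real.exp (-(c * ∑ i, β i ^ 2))) =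
      ENNReal.ofReal (Real.sqrt (π / c) ^ p) := by
  have h1 : Integrable (fun x : ℝ => Real.exp (-c * x ^ 2)) := integrable_exp_neg_mul_sq hc
  have h2 : Integrable (fun β : Fin p → ℝ => ∏ i, Real.exp (-c * β i ^ 2)) :=
    Integrable.fintype_prod (fun _ => h1)
  have heq : ∀ β : Fin p → ℝ,
      Real.exp (-(c * ∑ i, β i ^ 2)) = ∏ i, Real.exp (-c * β i ^ 2) := by
    intro β
    rw [← Real.exp_sum]
    congr 1
    rw [Finset.mul_sum, ← Finset.sum_neg_distrib]
    simp [neg_mul]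
  simp_rw [heq]
  rw [← ofReal_integral_eq_lintegral_ofReal h2
    (Filter.Eventually.of_forall fun β => Finset.prod_nonneg fun i _ => (Real.exp_pos _).le),
    volume_pi, integral_fintype_prod_eq_pow (ι := Fin p) (fun x : ℝ => Real.exp (-c * x ^ 2)),
    integral_gaussian, Fintype.card_fin]

lemma lintegral_exp_pos {p : ℕ} (g : (Fin p → ℝ) → ℝ) (hg : Continuous g) :
    0 < ∫⁻ β : Fin p → ℝ, ENNReal.ofReal (Real.exp (g β)) := by
  have hm : Measurable fun β : Fin p → ℝ => ENNReal.ofReal (Real.exp (g β)) :=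
    (Real.continuous_exp.comp hg).measurable.ennreal_ofReal
  rw [lintegral_pos_iff_support hm]
  have : (Function.support fun β : Fin p → ℝ => ENNReal.ofReal (Real.exp (g β))) = Set.univ := by
    refine Set.eq_univ_iff_forall.2 fun β => ?_
    exact ne_of_gt (ENNReal.ofReal_pos.2 (Real.exp_pos _))
  rw [this]
  exact isOpen_univ.measure_pos volume Set.univ_nonempty

lemma one_dim_finite {V k q : ℝ} (hV : 0 < V) (hk : k < 1) (hq : 0 < q) (hkq : 1 < k + q) :
    ∫⁻ A in Set.Ioi (0 : ℝ), ENNReal.ofReal (A ^ (-k) * (V + A) ^ (-q)) < ⊤ := by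
  have hsplit : Set.Ioi (0 : ℝ) = Set.Ioo 0 1 ∪ Set.Ici 1 :=
    (Set.Ioo_union_Ici_eq_Ioi one_pos).symm
  have hdisj : Disjoint (Set.Ioo (0:ℝ) 1) (Set.Ici 1) := by
    rw [Set.disjoint_left]
    rintro x ⟨_, h1⟩ h2
    exact absurd h2 (not_le.2 h1)
  rw [hsplit, lintegral_union measurableSet_Ici hdisj]
  refine ENNReal.add_lt_top.2 ⟨?_, ?_⟩
  · calc ∫⁻ A in Set.Ioo (0:ℝ) 1, ENNReal.ofReal (A ^ (-k) * (V + A) ^ (-q))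
        ≤ ∫⁻ A in Set.Ioo (0:ℝ) 1, ENNReal.ofReal (V ^ (-q) * A ^ (-k)) := by
          refine setLIntegral_mono (by fun_prop) ?_
          intro A hA
          refine ENNReal.ofReal_le_ofReal ?_
          rw [mul_comm (V ^ (-q))]
          exact mul_le_mul_of_nonneg_left
            (Real.rpow_le_rpow_of_nonpos hV (by linarith [hA.1]) (by linarith))
            (Real.rpow_nonneg hA.1.le _)
      _ < ⊤ := by
          have : IntegrableOn (fun A : ℝ => V ^ (-q) * A ^ (-k)) (Set.Ioo 0 1) :=
            ((intervalIntegral.integrableOn_Ioo_rpow_iff one_pos).2 (by linarith)).const_mul _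
          exact this.setLIntegral_lt_top
  · rw [setLIntegral_congr (Ioi_ae_eq_Ici (μ := (volume : Measure ℝ)) (a := (1:ℝ))).symm]
    calc ∫⁻ A in Set.Ioi (1:ℝ), ENNReal.ofReal (A ^ (-k) * (V + A) ^ (-q))
        ≤ ∫⁻ A in Set.Ioi (1:ℝ), ENNReal.ofReal (A ^ (-(k + q))) := by
          refine setLIntegral_mono (by fun_prop) ?_
          intro A hA
          have hA1 : (1:ℝ) < A := hA
          refine ENNReal.ofReal_le_ofReal ?_
          have h1 : (V + A) ^ (-q) ≤ A ^ (-q) :=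
            Real.rpow_le_rpow_of_nonpos (by linarith) (by linarith) (by linarith)
          have h2 : A ^ (-k) * (V + A) ^ (-q) ≤ A ^ (-k) * A ^ (-q) :=
            mul_le_mul_of_nonneg_left h1 (Real.rpow_nonneg (by linarith) _)
          rw [← Real.rpow_add (by linarith : (0:ℝ) < A)] at h2
          rw [neg_add]
          exact h2
      _ < ⊤ := (integrableOn_Ioi_rpow_of_lt (by linarith) one_pos).setLIntegral_lt_top

lemma one_dim_infinite {k : ℝ} (hk : 1 ≤ k) :
    ∫⁻ A in Set.Ioo (0 : ℝ) 1, ENNReal.ofReal (A ^ (-k)) = ⊤ := by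
  by_contra h
  have hmono : ∫⁻ A in Set.Ioo (0:ℝ) 1, ENNReal.ofReal (A ^ (-1 : ℝ))
      ≤ ∫⁻ A in Set.Ioo (0:ℝ) 1, ENNReal.ofReal (A ^ (-k)) := by
    refine setLIntegral_mono (by fun_prop) ?_
    intro A hA
    exact ENNReal.ofReal_le_ofReal
      (Real.rpow_le_rpow_of_exponent_ge hA.1 hA.2.le (by linarith))
  have hne : ∫⁻ A in Set.Ioo (0:ℝ) 1, ENNReal.ofReal (A ^ (-1 : ℝ)) ≠ ⊤ :=
    ne_top_of_le_ne_top h hmono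
  have hint : IntegrableOn (fun A : ℝ => A ^ (-1 : ℝ)) (Set.Ioo 0 1) := by
    rw [IntegrableOn, ← lintegral_ofReal_ne_top_iff_integrable
      ((by fun_prop : Measurable fun A : ℝ => A ^ (-1:ℝ)).aemeasurable.aestronglyMeasurable)
      ((ae_restrict_iff' measurableSet_Ioo).2 (Filter.Eventually.of_forall
        fun A hA => Real.rpow_nonneg hA.1.le _))]
    exact hne
  rw [intervalIntegral.integrableOn_Ioo_rpow_iff one_pos] at hint
  linarith


lemma eps_bound {m p : ℕ} (X : Matrix (Fin m) (Fin p) ℝ) (hX : X.rank = p) :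
    ∃ ε : ℝ, 0 < ε ∧ ∀ β : Fin p → ℝ,
    ε * ∑ i, β i ^ 2 ≤ ∑ i, X.mulVec β i ^ 2 := by
  have hker : LinearMap.ker X.mulVecLin = ⊥ := by
    have h1 : Module.finrank ℝ (LinearMap.range X.mulVecLin) = p := hX
    have h2 := LinearMap.finrank_range_add_finrank_ker X.mulVecLin
    rw [h1, Module.finrank_fin_fun] at h2
    exact Submodule.finrank_eq_zero.mp (by omega)
  obtain ⟨K, hK, hAL⟩ := X.mulVecLin.exists_antilipschitzWith hker
  have hnorm : ∀ β : Fin p → ℝ, ‖β‖ ≤ K * ‖X.mulVec β‖ := by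
    intro β
    have := hAL.le_mul_dist β 0
    simpa [dist_zero_right, Matrix.mulVecLin_apply] using this
  have hsum1 : ∀ β : Fin p → ℝ, ∑ i, β i ^ 2 ≤ (p : ℝ) * ‖β‖ ^ 2 := by
    intro β
    calc ∑ i, β i ^ 2 ≤ ∑ _i : Fin p, ‖β‖ ^ 2 := by
          refine Finset.sum_le_sum fun i _ => ?_
          have h := norm_le_pi_norm β i
          rw [Real.norm_eq_abs] at h
          calc β i ^ 2 = |β i| ^ 2 := (sq_abs _).symm
            _ ≤ ‖β‖ ^ 2 := pow_le_pow_left₀ (abs_nonneg _) h 2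
      _ = (p : ℝ) * ‖β‖ ^ 2 := by simp [Finset.sum_const, nsmul_eq_mul]
  have hsum2 : ∀ w : Fin m → ℝ, ‖w‖ ^ 2 ≤ ∑ i, w i ^ 2 := by
    intro w
    have hS : (0:ℝ) ≤ ∑ i, w i ^ 2 := Finset.sum_nonneg fun i _ => sq_nonneg _
    have h : ‖w‖ ≤ Real.sqrt (∑ i, w i ^ 2) := by
      refine pi_norm_le_iff_of_nonneg (Real.sqrt_nonneg _) |>.2 fun i => ?_
      rw [Real.norm_eq_abs]
      exact Real.abs_le_sqrt (Finset.single_le_sum (fun j _ => sq_nonneg (w j)) (Finset.mem_univ i))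
    calc ‖w‖ ^ 2 ≤ Real.sqrt (∑ i, w i ^ 2) ^ 2 := pow_le_pow_left₀ (norm_nonneg _) h 2
      _ = ∑ i, w i ^ 2 := Real.sq_sqrt hS
  refine ⟨((p : ℝ) * (K:ℝ) ^ 2 + 1)⁻¹, by positivity, fun β => ?_⟩
  have hXS : (0:ℝ) ≤ ∑ i, X.mulVec β i ^ 2 := Finset.sum_nonneg fun i _ => sq_nonneg _
  have h1 := hsum1 β
  have h2 : ‖β‖ ^ 2 ≤ (K:ℝ) ^ 2 * ‖X.mulVec β‖ ^ 2 := by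
    have := hnorm β
    nlinarith [norm_nonneg β, norm_nonneg (X.mulVec β), K.coe_nonneg]
  have h3 := hsum2 (X.mulVec β)
  have hchain : ∑ i, β i ^ 2 ≤ ((p : ℝ) * (K:ℝ) ^ 2 + 1) * ∑ i, X.mulVec β i ^ 2 := by
    have hp0 : (0:ℝ) ≤ (p:ℝ) := Nat.cast_nonneg p
    nlinarith [mul_le_mul_of_nonneg_left h2 hp0,
      mul_le_mul_of_nonneg_left h3 (by positivity : (0:ℝ) ≤ (p:ℝ) * (K:ℝ)^2)]
  have hpos : (0:ℝ) < (p : ℝ) * (K:ℝ) ^ 2 + 1 := by positivity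
  calc ((p : ℝ) * (K:ℝ) ^ 2 + 1)⁻¹ * ∑ i, β i ^ 2
      ≤ ((p : ℝ) * (K:ℝ) ^ 2 + 1)⁻¹ * (((p : ℝ) * (K:ℝ) ^ 2 + 1) * ∑ i, X.mulVec β i ^ 2) := by
        gcongr
    _ = ∑ i, X.mulVec β i ^ 2 := by
        rw [← mul_assoc, inv_mul_cancel₀ (ne_of_gt hpos), one_mul]

/-- For the prior `π(β, A) = A^{-k}` on `ℝ^p × (0,∞)` in the balanced
hierarchical model, the posterior is proper if `k < 1` and `m > p - 2k + 2`; in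
particular the uniform prior (`k = 0`) gives a proper posterior when `m > p + 2`, while
the priors `A⁻¹` and `A⁻²` always yield improper posteriors. -/
theorem statement13 {m p : ℕ} (hpm : p < m)
    (X : Matrix (Fin m) (Fin p) ℝ) (hX : X.rank = p)
    (y : Fin m → ℝ) (V : ℝ) (hV : 0 < V) (k : ℝ) :
    (k < 1 ∧ (m : ℝ) > (p : ℝ) - 2 * k + 2 → posteriorMass X y V k < ⊤) ∧
    (k = 1 ∨ k = 2 → posteriorMass X y V k = ⊤) := by
  unfold posteriorMass
  constructor
  · rintro ⟨hk, hm⟩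
    obtain ⟨ε, hε, hεb⟩ := eps_bound X hX
    set Y := ∑ i, y i ^ 2 with hYdef
    have hY : 0 ≤ Y := Finset.sum_nonneg fun i _ => sq_nonneg _
    set q : ℝ := ((m : ℝ) - p) / 2 with hqdef
    have hpm' : (p : ℝ) < m := Nat.cast_lt.2 hpm
    have hq : 0 < q := by rw [hqdef]; linarith
    have hkq : 1 < k + q := by rw [hqdef]; linarith
    set C2 : ℝ := Real.sqrt (4 * π / ε) ^ p with hC2def
    have hC2 : 0 ≤ C2 := pow_nonneg (Real.sqrt_nonneg _) _
    set C : ℝ := Real.exp (Y / (2 * V)) * C2 with hCdef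
    calc (∫⁻ A in Set.Ioi (0 : ℝ),
            ENNReal.ofReal (A ^ (-k)) *
              ∫⁻ β : Fin p → ℝ, ENNReal.ofReal
                ((V + A) ^ (-(m : ℝ) / 2) *
                  Real.exp (-(∑ i, (y i - X.mulVec β i) ^ 2) / (2 * (V + A)))))
        ≤ ∫⁻ A in Set.Ioi (0 : ℝ),
            ENNReal.ofReal C * ENNReal.ofReal (A ^ (-k) * (V + A) ^ (-q)) := by
          refine setLIntegral_mono' measurableSet_Ioi fun A hA => ?_
          have hA0 : (0 : ℝ) < A := hA
          have hσ : (0 : ℝ) < V + A := by linarith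
          have hc : 0 < ε / (4 * (V + A)) := by positivity
          have hinner : (∫⁻ β : Fin p → ℝ, ENNReal.ofReal
                ((V + A) ^ (-(m : ℝ) / 2) *
                  Real.exp (-(∑ i, (y i - X.mulVec β i) ^ 2) / (2 * (V + A)))))
              ≤ ENNReal.ofReal ((V + A) ^ (-(m : ℝ) / 2) * Real.exp (Y / (2 * V))) *
                  ENNReal.ofReal (Real.sqrt (π / (ε / (4 * (V + A)))) ^ p) := by
            rw [← gauss_lintegral p hc, ← lintegral_const_mul' _ _ ENNReal.ofReal_ne_top]
            refine lintegral_mono fun β => ?_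
            rw [← ENNReal.ofReal_mul (by positivity)]
            refine ENNReal.ofReal_le_ofReal ?_
            rw [mul_assoc]
            refine mul_le_mul_of_nonneg_left ?_ (Real.rpow_nonneg hσ.le _)
            rw [← Real.exp_add]
            refine Real.exp_le_exp.2 ?_
            set t := ∑ i, (y i - X.mulVec β i) ^ 2 with htdef
            set S := ∑ i, β i ^ 2 with hSdef
            have hS : 0 ≤ S := Finset.sum_nonneg fun i _ => sq_nonneg _
            have hlow : ε / 2 * S - Y ≤ t := by
              have h1 : ∀ i, X.mulVec β i ^ 2 / 2 - y i ^ 2 ≤ (y i - X.mulVec β i) ^ 2 :=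
                fun i => by nlinarith [sq_nonneg (X.mulVec β i - 2 * y i)]
              have h2 : ∑ i, (X.mulVec β i ^ 2 / 2 - y i ^ 2) ≤ t :=
                Finset.sum_le_sum fun i _ => h1 i
              rw [Finset.sum_sub_distrib, ← Finset.sum_div] at h2
              have h3 := hεb β
              rw [← hSdef] at h3
              linarith
            have step1 : -t / (2 * (V + A)) ≤ (Y - ε / 2 * S) / (2 * (V + A)) := by
              gcongr <;> linarith
            have step2 : (Y - ε / 2 * S) / (2 * (V + A)) =
                Y / (2 * (V + A)) - ε / (4 * (V + A)) * S := by
              field_simp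
              ring
            have step3 : Y / (2 * (V + A)) ≤ Y / (2 * V) := by
              gcongr
              linarith
            rw [step2] at step1
            linarith
          have hsqrt : Real.sqrt (π / (ε / (4 * (V + A)))) ^ p = C2 * (V + A) ^ ((p : ℝ) / 2) := by
            have h1 : π / (ε / (4 * (V + A))) = (4 * π / ε) * (V + A) := by
              field_simp
            rw [h1, Real.sqrt_mul (by positivity), mul_pow, hC2def]
            congr 1
            rw [Real.sqrt_eq_rpow, ← Real.rpow_natCast ((V + A) ^ ((1 : ℝ) / 2)) p,
              ← Real.rpow_mul hσ.le]
            congr 1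
            ring
          rw [hsqrt] at hinner
          calc ENNReal.ofReal (A ^ (-k)) *
                (∫⁻ β : Fin p → ℝ, ENNReal.ofReal
                  ((V + A) ^ (-(m : ℝ) / 2) *
                    Real.exp (-(∑ i, (y i - X.mulVec β i) ^ 2) / (2 * (V + A)))))
              ≤ ENNReal.ofReal (A ^ (-k)) *
                  (ENNReal.ofReal ((V + A) ^ (-(m : ℝ) / 2) * Real.exp (Y / (2 * V))) *
                    ENNReal.ofReal (C2 * (V + A) ^ ((p : ℝ) / 2))) :=
                mul_le_mul_right hinner _
            _ = ENNReal.ofReal C * ENNReal.ofReal (A ^ (-k) * (V + A) ^ (-q)) := by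
                rw [← ENNReal.ofReal_mul (by positivity), ← ENNReal.ofReal_mul (by positivity),
                  ← ENNReal.ofReal_mul (by positivity)]
                congr 1
                have hpow : (V + A) ^ (-(m : ℝ) / 2) * (V + A) ^ ((p : ℝ) / 2)
                    = (V + A) ^ (-q) := by
                  rw [← Real.rpow_add hσ]
                  congr 1
                  rw [hqdef]
                  ring
                rw [hCdef, ← hpow]
                ring
      _ = ENNReal.ofReal C * ∫⁻ A in Set.Ioi (0 : ℝ),
            ENNReal.ofReal (A ^ (-k) * (V + A) ^ (-q)) :=
          lintegral_const_mul' _ _ ENNReal.ofReal_ne_top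
      _ < ⊤ := ENNReal.mul_lt_top ENNReal.ofReal_lt_top (one_dim_finite hV hk hq hkq)
  · intro hk12
    have hk1 : (1 : ℝ) ≤ k := by rcases hk12 with rfl | rfl <;> norm_num
    rw [eq_top_iff]
    have hcm : Continuous fun β : Fin p → ℝ => X.mulVec β := by
      have h := X.mulVecLin.continuous_of_finiteDimensional
      exact h
    have hcont : Continuous fun β : Fin p → ℝ =>
        -(∑ i, (y i - X.mulVec β i) ^ 2) / (2 * V) := by
      apply Continuous.div_const
      apply Continuous.neg
      apply continuous_finset_sum
      intro i _
      exact (continuous_const.sub ((continuous_apply i).comp hcm)).pow 2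
    set c₂ := ∫⁻ β : Fin p → ℝ, ENNReal.ofReal
      (Real.exp (-(∑ i, (y i - X.mulVec β i) ^ 2) / (2 * V))) with hc2def
    have hc2pos : 0 < c₂ := lintegral_exp_pos _ hcont
    set c₃ := min c₂ 1 with hc3def
    have hc3pos : 0 < c₃ := lt_min hc2pos zero_lt_one
    have hc3top : c₃ ≠ ⊤ := ne_top_of_le_ne_top ENNReal.one_ne_top (min_le_right _ _)
    set K₀ := ENNReal.ofReal ((V + 1) ^ (-(m : ℝ) / 2)) * c₃ with hK0def
    have hK₀pos : K₀ ≠ 0 := by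
      refine mul_ne_zero ?_ (ne_of_gt hc3pos)
      exact ne_of_gt (ENNReal.ofReal_pos.2 (Real.rpow_pos_of_pos (by linarith) _))
    have hK₀top : K₀ ≠ ⊤ := ENNReal.mul_ne_top ENNReal.ofReal_ne_top hc3top
    calc (⊤ : ENNReal) = K₀ * ∫⁻ A in Set.Ioo (0 : ℝ) 1, ENNReal.ofReal (A ^ (-k)) := by
          rw [one_dim_infinite hk1, ENNReal.mul_top hK₀pos]
      _ = ∫⁻ A in Set.Ioo (0 : ℝ) 1, K₀ * ENNReal.ofReal (A ^ (-k)) :=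
          (lintegral_const_mul' _ _ hK₀top).symm
      _ ≤ ∫⁻ A in Set.Ioo (0 : ℝ) 1,
            ENNReal.ofReal (A ^ (-k)) *
              ∫⁻ β : Fin p → ℝ, ENNReal.ofReal
                ((V + A) ^ (-(m : ℝ) / 2) *
                  Real.exp (-(∑ i, (y i - X.mulVec β i) ^ 2) / (2 * (V + A)))) := by
          refine setLIntegral_mono' measurableSet_Ioo fun A hA => ?_
          rw [mul_comm]
          refine mul_le_mul_right ?_ _
          have hA0 : (0 : ℝ) < A := hA.1
          have hA1 : A < 1 := hA.2
          have hσ : (0 : ℝ) < V + A := by linarith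
          have heq : ENNReal.ofReal ((V + 1) ^ (-(m : ℝ) / 2)) * c₂ =
              ∫⁻ β : Fin p → ℝ, ENNReal.ofReal
                ((V + 1) ^ (-(m : ℝ) / 2) *
                  Real.exp (-(∑ i, (y i - X.mulVec β i) ^ 2) / (2 * V))) := by
            rw [hc2def, ← lintegral_const_mul' _ _ ENNReal.ofReal_ne_top]
            congr 1
            funext β
            rw [← ENNReal.ofReal_mul (Real.rpow_nonneg (by linarith) _)]
          calc K₀ ≤ ENNReal.ofReal ((V + 1) ^ (-(m : ℝ) / 2)) * c₂ := by
                rw [hK0def]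
                exact mul_le_mul_right (min_le_left _ _) _
            _ = _ := heq
            _ ≤ _ := by
                refine lintegral_mono fun β => ?_
                refine ENNReal.ofReal_le_ofReal ?_
                set t := ∑ i, (y i - X.mulVec β i) ^ 2 with htdef
                have ht : 0 ≤ t := Finset.sum_nonneg fun i _ => sq_nonneg _
                refine mul_le_mul ?_ ?_ (Real.exp_pos _).le (Real.rpow_nonneg hσ.le _)
                · refine Real.rpow_le_rpow_of_nonpos hσ (by linarith) ?_
                  rw [neg_div]
                  exact neg_nonpos.2 (by positivity)
                · refine Real.exp_le_exp.2 ?_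
                  rw [neg_div, neg_div, neg_le_neg_iff]
                  gcongr
                  linarith
      _ ≤ ∫⁻ A in Set.Ioi (0 : ℝ),
            ENNReal.ofReal (A ^ (-k)) *
              ∫⁻ β : Fin p → ℝ, ENNReal.ofReal
                ((V + A) ^ (-(m : ℝ) / 2) *
                  Real.exp (-(∑ i, (y i - X.mulVec β i) ^ 2) / (2 * (V + A)))) :=
          lintegral_mono_set Set.Ioo_subset_Ioi_self
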